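/- Let f be a continuous function nonzero on the spectrum of a symmetric tridiagonal matrix T with simple spectrum, and define the QR step F(T) = Q(f(T))ᵀ T Q(f(T)). In π-bidiagonal coordinates F acts by βᵢ^π ↦ |f(λ_{π(i+1)})/f(λ_{π(i)})| · βᵢ^π. Consequently, if T ∈ U_Λ^π and |f(λ_{π(1)})| > ... > |f(λ_{π(n)})|, then the iterates F^k(T) converge to Λ^π as k → ∞. -/

import Mathlib

open Matrix

/-- `L` is lower triangular with unit diagonal. -/
def IsUnipLower {n : ℕ} (L : Matrix (Fin n) (Fin n) ℝ) : Prop :=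
  (∀ i j : Fin n, i < j → L i j = 0) ∧ ∀ i : Fin n, L i i = 1

/-- `U` is upper triangular with strictly positive diagonal. -/
def IsUpperTriPos {n : ℕ} (U : Matrix (Fin n) (Fin n) ℝ) : Prop :=
  (∀ i j : Fin n, j < i → U i j = 0) ∧ ∀ i : Fin n, 0 < U i i

/-- The leading principal minor of order `k` of `M`. -/
def leadingMinor {n : ℕ} (M : Matrix (Fin n) (Fin n) ℝ) (k : ℕ) (h : k ≤ n) : ℝ :=
  (Matrix.of fun i j : Fin k => M (Fin.castLE h i) (Fin.castLE h j)).det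

/-- `M` is LU-positive: all leading principal minors are strictly positive. -/
def LUPositive {n : ℕ} (M : Matrix (Fin n) (Fin n) ℝ) : Prop :=
  ∀ k (h : k ≤ n), 0 < leadingMinor M k h

/-- `Q` is orthogonal. -/
def IsOrth {n : ℕ} (Q : Matrix (Fin n) (Fin n) ℝ) : Prop := Qᵀ * Q = 1

/-- `E` is a sign diagonal `diag(±1, …, ±1)`. -/
def IsSignDiag {n : ℕ} (E : Matrix (Fin n) (Fin n) ℝ) : Prop :=
  (∀ i j : Fin n, i ≠ j → E i j = 0) ∧ ∀ i : Fin n, E i i = 1 ∨ E i i = -1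

/-- `M` is tridiagonal. -/
def IsTridiag {n : ℕ} (M : Matrix (Fin n) (Fin n) ℝ) : Prop :=
  ∀ i j : Fin n, ((i : ℕ) + 1 < (j : ℕ) ∨ (j : ℕ) + 1 < (i : ℕ)) → M i j = 0

/-- `π`-normalized chart data for `T`: an LU-positive orthogonal `Q` diagonalizing `T`,
its LU factorization `Q = L * U`, and the associated bidiagonal matrix `B = L⁻¹ Λ L`. -/
def ChartData {n : ℕ} (lamπ : Fin n → ℝ) (T Q L U B : Matrix (Fin n) (Fin n) ℝ) : Prop :=
  IsOrth Q ∧ LUPositive Q ∧ T = Qᵀ * Matrix.diagonal lamπ * Q ∧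
    Q = L * U ∧ IsUnipLower L ∧ IsUpperTriPos U ∧
    L * B = Matrix.diagonal lamπ * L ∧
    (∀ i j : Fin n, (i : ℕ) ≠ (j : ℕ) → (i : ℕ) ≠ (j : ℕ) + 1 → B i j = 0)

section QRhelpers
open Filter Topology

variable {n : ℕ} {A B : Matrix (Fin n) (Fin n) ℝ}

lemma upper_mul_upper (hA : ∀ i j : Fin n, j < i → A i j = 0)
    (hB : ∀ i j : Fin n, j < i → B i j = 0) (i j : Fin n) (hij : j < i) :
    (A * B) i j = 0 := by
  rw [Matrix.mul_apply]
  apply Finset.sum_eq_zero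
  intro m _
  rcases lt_or_ge m i with h | h
  · rw [hA i m h, zero_mul]
  · rw [hB m j (lt_of_lt_of_le hij h), mul_zero]

lemma lower_mul_lower (hA : ∀ i j : Fin n, i < j → A i j = 0)
    (hB : ∀ i j : Fin n, i < j → B i j = 0) (i j : Fin n) (hij : i < j) :
    (A * B) i j = 0 := by
  rw [Matrix.mul_apply]
  apply Finset.sum_eq_zero
  intro m _
  rcases lt_or_ge i m with h | h
  · rw [hA i m h, zero_mul]
  · rw [hB m j (lt_of_le_of_lt h hij), mul_zero]

lemma diag_mul_upper (hA : ∀ i j : Fin n, j < i → A i j = 0)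
    (hB : ∀ i j : Fin n, j < i → B i j = 0) (i : Fin n) :
    (A * B) i i = A i i * B i i := by
  rw [Matrix.mul_apply]
  apply Finset.sum_eq_single
  · intro m _ hm
    rcases lt_or_gt_of_ne hm with h | h
    · rw [hA i m h, zero_mul]
    · rw [hB m i h, mul_zero]
  · intro h; exact absurd (Finset.mem_univ i) h

lemma diag_mul_lower (hA : ∀ i j : Fin n, i < j → A i j = 0)
    (hB : ∀ i j : Fin n, i < j → B i j = 0) (i : Fin n) :
    (A * B) i i = A i i * B i i := by
  rw [Matrix.mul_apply]
  apply Finset.sum_eq_single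
  · intro m _ hm
    rcases lt_or_gt_of_ne hm with h | h
    · rw [hB m i h, mul_zero]
    · rw [hA i m h, zero_mul]
  · intro h; exact absurd (Finset.mem_univ i) h

lemma IsUpperTriPos.mul (hA : IsUpperTriPos A) (hB : IsUpperTriPos B) :
    IsUpperTriPos (A * B) := by
  refine ⟨upper_mul_upper hA.1 hB.1, fun i => ?_⟩
  rw [diag_mul_upper hA.1 hB.1]
  exact mul_pos (hA.2 i) (hB.2 i)

lemma IsUpperTriPos.blockTriangular (hA : IsUpperTriPos A) : A.BlockTriangular id :=
  fun i j h => hA.1 i j h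

lemma IsUnipLower.blockTriangular (hA : IsUnipLower A) :
    A.BlockTriangular OrderDual.toDual :=
  fun i j h => hA.1 i j h

lemma IsUpperTriPos.det_pos (hA : IsUpperTriPos A) : 0 < A.det := by
  rw [Matrix.det_of_upperTriangular hA.blockTriangular]
  exact Finset.prod_pos fun i _ => hA.2 i

lemma IsUpperTriPos.inv (hA : IsUpperTriPos A) :
    IsUpperTriPos A⁻¹ ∧ A * A⁻¹ = 1 ∧ A⁻¹ * A = 1 := by
  have hdet : IsUnit A.det := isUnit_iff_ne_zero.2 (ne_of_gt hA.det_pos)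
  have hInv : Invertible A := A.invertibleOfIsUnitDet hdet
  have h1 : A * A⁻¹ = 1 := Matrix.mul_nonsing_inv A hdet
  have h2 : A⁻¹ * A = 1 := Matrix.nonsing_inv_mul A hdet
  have hbt : A⁻¹.BlockTriangular id :=
    Matrix.blockTriangular_inv_of_blockTriangular hA.blockTriangular
  refine ⟨⟨fun i j h => hbt h, fun i => ?_⟩, h1, h2⟩
  have := diag_mul_upper hA.1 (fun i j h => hbt h) i
  rw [h1, Matrix.one_apply_eq] at this
  have hAii := hA.2 i
  nlinarith [mul_pos hAii hAii]

lemma IsUnipLower.inv (hA : IsUnipLower A) :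
    IsUnipLower A⁻¹ ∧ A * A⁻¹ = 1 ∧ A⁻¹ * A = 1 := by
  have hdet : A.det = 1 := by
    rw [Matrix.det_of_lowerTriangular A hA.blockTriangular]
    simp [hA.2]
  have hdet' : IsUnit A.det := by rw [hdet]; exact isUnit_one
  have hInv : Invertible A := A.invertibleOfIsUnitDet hdet'
  have h1 : A * A⁻¹ = 1 := Matrix.mul_nonsing_inv A hdet'
  have h2 : A⁻¹ * A = 1 := Matrix.nonsing_inv_mul A hdet'
  have hbt : A⁻¹.BlockTriangular OrderDual.toDual :=
    Matrix.blockTriangular_inv_of_blockTriangular hA.blockTriangular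
  refine ⟨⟨fun i j h => hbt h, fun i => ?_⟩, h1, h2⟩
  have := diag_mul_lower hA.1 (fun i j h => hbt h) i
  rw [h1, Matrix.one_apply_eq, hA.2 i, one_mul] at this
  exact this.symm

lemma IsOrth.mul_transpose (hQ : IsOrth A) : A * Aᵀ = 1 :=
  mul_eq_one_comm.1 hQ

lemma IsOrth.mul (hA : IsOrth A) (hB : IsOrth B) : IsOrth (A * B) := by
  unfold IsOrth at *
  rw [Matrix.transpose_mul]
  calc Bᵀ * Aᵀ * (A * B) = Bᵀ * (Aᵀ * A) * B := by
        rw [Matrix.mul_assoc, Matrix.mul_assoc, Matrix.mul_assoc]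
    _ = 1 := by rw [hA, mul_one, hB]

lemma IsOrth.entry_mem (hA : IsOrth A) (i j : Fin n) : A i j ∈ Set.Icc (-1 : ℝ) 1 := by
  have h1 : (Aᵀ * A) j j = 1 := by rw [hA, Matrix.one_apply_eq]
  rw [Matrix.mul_apply] at h1
  have hle : A i j * A i j ≤ ∑ m, Aᵀ j m * A m j := by
    have : ∀ m ∈ Finset.univ, (0:ℝ) ≤ Aᵀ j m * A m j := by
      intro m _; rw [Matrix.transpose_apply]; exact mul_self_nonneg _
    have := Finset.single_le_sum this (Finset.mem_univ i)
    rwa [Matrix.transpose_apply] at this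
  rw [h1] at hle
  constructor <;> nlinarith



variable {n : ℕ} {A B L U : Matrix (Fin n) (Fin n) ℝ}


lemma submatrix_mul_of_lower {k : ℕ} (h : k ≤ n)
    (hA : ∀ i j : Fin n, i < j → A i j = 0) :
    (Matrix.of fun i j : Fin k => (A * B) (Fin.castLE h i) (Fin.castLE h j)) =
      (Matrix.of fun i j : Fin k => A (Fin.castLE h i) (Fin.castLE h j)) *
      (Matrix.of fun i j : Fin k => B (Fin.castLE h i) (Fin.castLE h j)) := by
  ext i j
  rw [Matrix.mul_apply, Matrix.of_apply, Matrix.mul_apply]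
  simp only [Matrix.of_apply]
  rw [← Finset.sum_subset (Finset.subset_univ
    ((Finset.univ : Finset (Fin n)).filter (fun m : Fin n => (m : ℕ) < k)))]
  · refine (Finset.sum_bij (fun (m : Fin k) _ => Fin.castLE h m) ?_ ?_ ?_ ?_).symm
    · intro m _
      simp [Fin.castLE, m.isLt]
    · intro a _ b _ hab
      have : (Fin.castLE h a : Fin n) = Fin.castLE h b := hab
      simpa [Fin.ext_iff] using this
    · intro m hm
      simp only [Finset.mem_filter] at hm
      exact ⟨⟨(m : ℕ), hm.2⟩, Finset.mem_univ _, rfl⟩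
    · intro m _; rfl
  · intro m _ hm
    simp only [Finset.mem_filter, Finset.mem_univ, true_and, not_lt] at hm
    have : Fin.castLE h i < m := by
      rw [Fin.lt_def]
      exact lt_of_lt_of_le i.isLt hm
    rw [hA _ _ this, zero_mul]

lemma leadingMinor_mul_of_lower {k : ℕ} (h : k ≤ n)
    (hA : ∀ i j : Fin n, i < j → A i j = 0) :
    leadingMinor (A * B) k h = leadingMinor A k h * leadingMinor B k h := by
  unfold leadingMinor
  rw [submatrix_mul_of_lower h hA, Matrix.det_mul]



lemma leadingMinor_unipLower (hL : IsUnipLower L) (k : ℕ) (h : k ≤ n) :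
    leadingMinor L k h = 1 := by
  unfold leadingMinor
  rw [Matrix.det_of_lowerTriangular]
  · apply Finset.prod_eq_one
    intro i _
    exact hL.2 _
  · intro i j hij
    have hij' : (i : Fin k) < j := hij
    exact hL.1 _ _ (by rw [Fin.lt_def] at hij' ⊢; exact hij')

lemma leadingMinor_upperPos (hU : IsUpperTriPos U) (k : ℕ) (h : k ≤ n) :
    0 < leadingMinor U k h := by
  unfold leadingMinor
  rw [Matrix.det_of_upperTriangular]
  · exact Finset.prod_pos fun i _ => hU.2 _
  · intro i j hij
    exact hU.1 _ _ (by rwa [Fin.lt_def] at hij ⊢)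

lemma luPositive_mul (hL : IsUnipLower L) (hU : IsUpperTriPos U) :
    LUPositive (L * U) := by
  intro k h
  rw [leadingMinor_mul_of_lower h hL.1, leadingMinor_unipLower hL, one_mul]
  exact leadingMinor_upperPos hU k h

/-- If two orthogonal matrices diagonalize to the same matrix w.r.t. a diagonal with
distinct entries, then conjugating any other diagonal gives the same result. -/
lemma conj_diag_unique {lamπ d : Fin n → ℝ} (hdist : ∀ i j : Fin n, lamπ i = lamπ j → i = j)
    {S S' : Matrix (Fin n) (Fin n) ℝ} (hS : IsOrth S) (hS' : IsOrth S')
    (h : Sᵀ * Matrix.diagonal lamπ * S = S'ᵀ * Matrix.diagonal lamπ * S') :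
    Sᵀ * Matrix.diagonal d * S = S'ᵀ * Matrix.diagonal d * S' := by
  set Λ := Matrix.diagonal lamπ
  set M := S' * Sᵀ with hM
  have hMorth : Mᵀ * M = 1 := by
    rw [hM, Matrix.transpose_mul, Matrix.transpose_transpose]
    calc S * S'ᵀ * (S' * Sᵀ) = S * (S'ᵀ * S') * Sᵀ := by
          rw [Matrix.mul_assoc, Matrix.mul_assoc, Matrix.mul_assoc]
      _ = 1 := by rw [hS', Matrix.mul_one, hS.mul_transpose]
  have hMS : M * S = S' := by
    rw [hM, Matrix.mul_assoc, hS, Matrix.mul_one]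
  have hcomm : M * Λ = Λ * M := by
    have h1 : M * Λ * Mᵀ = Λ := by
      have : S' * (Sᵀ * Λ * S) * S'ᵀ = S' * (S'ᵀ * Λ * S') * S'ᵀ := by rw [h]
      calc M * Λ * Mᵀ = S' * (Sᵀ * Λ * S) * S'ᵀ := by
            rw [hM, Matrix.transpose_mul, Matrix.transpose_transpose]
            noncomm_ring
        _ = S' * (S'ᵀ * Λ * S') * S'ᵀ := this
        _ = (S' * S'ᵀ) * Λ * (S' * S'ᵀ) := by noncomm_ring
        _ = Λ := by rw [hS'.mul_transpose, Matrix.one_mul, Matrix.mul_one]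
    calc M * Λ = M * Λ * (Mᵀ * M) := by rw [hMorth, Matrix.mul_one]
      _ = (M * Λ * Mᵀ) * M := by noncomm_ring
      _ = Λ * M := by rw [h1]
  have hMdiag : ∀ i j : Fin n, i ≠ j → M i j = 0 := by
    intro i j hij
    have h2 : (M * Λ) i j = (Λ * M) i j := by rw [hcomm]
    rw [Matrix.mul_diagonal, Matrix.diagonal_mul] at h2
    by_contra hne
    have hlam : lamπ j = lamπ i :=
      mul_left_cancel₀ hne (by rw [h2, mul_comm])
    exact hij (hdist i j hlam.symm)
  have hMd : M * Matrix.diagonal d = Matrix.diagonal d * M := by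
    ext i j
    rw [Matrix.mul_diagonal, Matrix.diagonal_mul]
    by_cases hij : i = j
    · rw [hij, mul_comm]
    · rw [hMdiag i j hij, mul_zero, zero_mul]
  have hconj : Mᵀ * Matrix.diagonal d * M = Matrix.diagonal d := by
    calc Mᵀ * Matrix.diagonal d * M = Mᵀ * (Matrix.diagonal d * M) := Matrix.mul_assoc _ _ _
      _ = Mᵀ * (M * Matrix.diagonal d) := by rw [hMd]
      _ = Mᵀ * M * Matrix.diagonal d := (Matrix.mul_assoc _ _ _).symm
      _ = Matrix.diagonal d := by rw [hMorth, Matrix.one_mul]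
  calc Sᵀ * Matrix.diagonal d * S = Sᵀ * (Mᵀ * Matrix.diagonal d * M) * S := by rw [hconj]
    _ = (M * S)ᵀ * Matrix.diagonal d * (M * S) := by
        simp only [Matrix.transpose_mul, Matrix.transpose_transpose, Matrix.mul_assoc]
    _ = S'ᵀ * Matrix.diagonal d * S' := by rw [hMS]

lemma matrix_tendsto_of_entries {A : ℕ → Matrix (Fin n) (Fin n) ℝ}
    {M : Matrix (Fin n) (Fin n) ℝ}
    (h : ∀ i j, Tendsto (fun k => A k i j) atTop (𝓝 (M i j))) :
    Tendsto A atTop (𝓝 M) := by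
  refine tendsto_pi_nhds.2 ?_
  intro i
  rw [tendsto_pi_nhds]
  exact h i


lemma matrix_entry_tendsto {A : ℕ → Matrix (Fin n) (Fin n) ℝ}
    {M : Matrix (Fin n) (Fin n) ℝ} (h : Tendsto A atTop (𝓝 M)) (i j : Fin n) :
    Tendsto (fun k => A k i j) atTop (𝓝 (M i j)) :=
  ((continuous_apply_apply i j).tendsto M).comp h

lemma upper_orth_eq_one {a : Matrix (Fin n) (Fin n) ℝ} (horth : aᵀ * a = 1)
    (hup : ∀ i j : Fin n, j < i → a i j = 0) (hdiag : ∀ i, 0 ≤ a i i) : a = 1 := by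
  have hdet : IsUnit a.det := by
    have : a.det * a.det = 1 := by
      have := congrArg Matrix.det horth
      rwa [Matrix.det_mul, Matrix.det_transpose, Matrix.det_one] at this
    exact isUnit_iff_ne_zero.2 (by intro h0; rw [h0, mul_zero] at this; norm_num at this)
  have hInv : Invertible a := a.invertibleOfIsUnitDet hdet
  have hainv : a⁻¹ = aᵀ := Matrix.inv_eq_left_inv horth
  have hbt : BlockTriangular a⁻¹ id :=
    Matrix.blockTriangular_inv_of_blockTriangular (fun i j h => hup i j h)
  have hlow : ∀ i j : Fin n, i < j → a i j = 0 := by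
    intro i j hij
    have := hbt (show id i < id j from hij)
    rwa [hainv, Matrix.transpose_apply] at this
  have hdiag1 : ∀ i : Fin n, a i i = 1 := by
    intro i
    have h1 : (aᵀ * a) i i = 1 := by rw [horth, Matrix.one_apply_eq]
    rw [Matrix.mul_apply] at h1
    have h2 : ∑ m, aᵀ i m * a m i = a i i * a i i := by
      apply Finset.sum_eq_single
      · intro m _ hm
        rcases lt_or_gt_of_ne hm with h | h
        · rw [hlow m i h]; rw [mul_zero]
        · rw [hup m i h, mul_zero]
      · intro h; exact absurd (Finset.mem_univ i) h
    have h3 : a i i * a i i = 1 := by rw [← h2]; exact h1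
    rcases mul_self_eq_one_iff.1 h3 with h4 | h4
    · exact h4
    · exfalso; have := hdiag i; rw [h4] at this; linarith
  ext i j
  rcases lt_trichotomy i j with h | h | h
  · rw [hlow i j h, Matrix.one_apply_ne (ne_of_lt h)]
  · rw [h, hdiag1, Matrix.one_apply_eq]
  · rw [hup i j h, Matrix.one_apply_ne (ne_of_gt h)]

lemma isCompact_entry_box :
    IsCompact {M : Matrix (Fin n) (Fin n) ℝ | ∀ i j, M i j ∈ Set.Icc (-1 : ℝ) 1} := by
  have h : {M : Matrix (Fin n) (Fin n) ℝ | ∀ i j, M i j ∈ Set.Icc (-1 : ℝ) 1} =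
      Set.univ.pi fun _ : Fin n => Set.univ.pi fun _ : Fin n => Set.Icc (-1 : ℝ) 1 := by
    ext M
    constructor
    · intro h i _
      exact fun j _ => h i j
    · intro h i j
      exact h i (Set.mem_univ i) j (Set.mem_univ j)
  rw [h]
  exact isCompact_univ_pi fun _ => isCompact_univ_pi fun _ => isCompact_Icc

/-- Key analytic lemma: if `C k` are orthogonal, `N k * C k` is upper triangular with
positive diagonal, and `N k → 1`, then `C k → 1`. -/
lemma tendsto_one_of_orth_triangular (C N : ℕ → Matrix (Fin n) (Fin n) ℝ)
    (hC : ∀ k, IsOrth (C k))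
    (hup : ∀ k, ∀ i j : Fin n, j < i → (N k * C k) i j = 0)
    (hpos : ∀ k, ∀ i : Fin n, 0 < (N k * C k) i i)
    (hN : Tendsto N atTop (𝓝 1)) :
    Tendsto C atTop (𝓝 1) := by
  haveI : FirstCountableTopology (Matrix (Fin n) (Fin n) ℝ) :=
    inferInstanceAs (FirstCountableTopology (Fin n → Fin n → ℝ))
  apply tendsto_of_subseq_tendsto
  intro ns hns
  obtain ⟨a, ha, φ, hφ, hlim⟩ := isCompact_entry_box.tendsto_subseq
    (x := fun m => C (ns m)) (fun m => (hC (ns m)).entry_mem)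
  refine ⟨φ, ?_⟩
  have hσ : Tendsto (fun m => ns (φ m)) atTop atTop := hns.comp hφ.tendsto_atTop
  have hCa : Tendsto (fun m => C (ns (φ m))) atTop (𝓝 a) := hlim
  have hNa : Tendsto (fun m => N (ns (φ m))) atTop (𝓝 1) := hN.comp hσ
  have hRa : Tendsto (fun m => N (ns (φ m)) * C (ns (φ m))) atTop (𝓝 a) := by
    have := hNa.mul hCa
    rwa [one_mul] at this
  have hCat : Tendsto (fun m => (C (ns (φ m)))ᵀ) atTop (𝓝 aᵀ) :=
    (continuous_id.matrix_transpose.tendsto a).comp hCa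
  have horth : aᵀ * a = 1 := by
    have h1 : Tendsto (fun m => (C (ns (φ m)))ᵀ * C (ns (φ m))) atTop (𝓝 (aᵀ * a)) :=
      hCat.mul hCa
    have h2 : Tendsto (fun m => (C (ns (φ m)))ᵀ * C (ns (φ m))) atTop
        (𝓝 (1 : Matrix (Fin n) (Fin n) ℝ)) := by
      have : (fun m => (C (ns (φ m)))ᵀ * C (ns (φ m))) = fun _ => 1 := by
        funext m; exact hC (ns (φ m))
      rw [this]; exact tendsto_const_nhds
    exact tendsto_nhds_unique h1 h2
  have haup : ∀ i j : Fin n, j < i → a i j = 0 := by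
    intro i j hij
    have h1 := matrix_entry_tendsto hRa i j
    have h2 : (fun m => (N (ns (φ m)) * C (ns (φ m))) i j) = fun _ => (0:ℝ) := by
      funext m; exact hup _ i j hij
    rw [h2] at h1
    exact tendsto_nhds_unique h1 tendsto_const_nhds
  have hadiag : ∀ i : Fin n, 0 ≤ a i i := by
    intro i
    have h1 := matrix_entry_tendsto hRa i i
    exact le_of_tendsto_of_tendsto' tendsto_const_nhds h1 fun m => le_of_lt (hpos _ i)
  rw [upper_orth_eq_one horth haup hadiag] at hCa
  exact hCa

variable {n : ℕ}

lemma conjMul (X A B : Matrix (Fin n) (Fin n) ℝ) :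
    (A * B)ᵀ * X * (A * B) = Bᵀ * (Aᵀ * X * A) * B := by
  simp only [Matrix.transpose_mul, Matrix.mul_assoc]

lemma part1Main (lamπ fπ : Fin n → ℝ) (hfnz : ∀ i, fπ i ≠ 0)
    (T Q L U B Qf Rf : Matrix (Fin n) (Fin n) ℝ)
    (hCD : ChartData lamπ T Q L U B) (hQf : IsOrth Qf) (hRf : IsUpperTriPos Rf)
    (hfac : Qᵀ * Matrix.diagonal fπ * Q = Qf * Rf) :
    ∃ Q' L' U' B' : Matrix (Fin n) (Fin n) ℝ,
      ChartData lamπ (Qfᵀ * T * Qf) Q' L' U' B' ∧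
      ∀ i j : Fin n, B' i j = |fπ i| * B i j * (|fπ j|)⁻¹ := by
  obtain ⟨hQ, hQpos, hT, hQLU, hL, hU, hLB, hBz⟩ := hCD
  set δ : Fin n → ℝ := fun i => |fπ i| with hδdef
  have hδ : ∀ i, 0 < δ i := fun i => abs_pos.2 (hfnz i)
  set Δ : Matrix (Fin n) (Fin n) ℝ := Matrix.diagonal δ with hΔdef
  set Δ' : Matrix (Fin n) (Fin n) ℝ := Matrix.diagonal (fun i => (δ i)⁻¹) with hΔ'def
  set Df : Matrix (Fin n) (Fin n) ℝ := Matrix.diagonal fπ with hDfdef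
  set Λ : Matrix (Fin n) (Fin n) ℝ := Matrix.diagonal lamπ with hΛdef
  have hΔΔ' : Δ * Δ' = 1 := by
    rw [hΔdef, hΔ'def, Matrix.diagonal_mul_diagonal, ← Matrix.diagonal_one]
    exact congrArg _ (funext fun i => mul_inv_cancel₀ (hδ i).ne')
  have hΔ'Δ : Δ' * Δ = 1 := by
    rw [hΔdef, hΔ'def, Matrix.diagonal_mul_diagonal, ← Matrix.diagonal_one]
    exact congrArg _ (funext fun i => inv_mul_cancel₀ (hδ i).ne')
  obtain ⟨hV, hRfV, hVRf⟩ := hRf.inv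
  set V : Matrix (Fin n) (Fin n) ℝ := Rf⁻¹
  have hΔt : Δᵀ = Δ := by rw [hΔdef]; exact Matrix.diagonal_transpose δ
  have hent : ∀ (M : Matrix (Fin n) (Fin n) ℝ) (i j : Fin n),
      (Δ * M * Δ') i j = δ i * M i j * (δ j)⁻¹ := by
    intro M i j
    rw [hΔdef, hΔ'def, Matrix.mul_diagonal, Matrix.diagonal_mul]
  have hΔup : ∀ i j : Fin n, j < i → Δ i j = 0 := by
    intro i j hij
    rw [hΔdef]
    exact Matrix.diagonal_apply_ne δ (ne_of_gt hij)
  have hΔdiag : ∀ i : Fin n, Δ i i = δ i := by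
    intro i; rw [hΔdef]; exact Matrix.diagonal_apply_eq δ i
  -- key algebraic identities
  have hQ'LU : Δ * Q * V = (Δ * L * Δ') * (Δ * U * V) := by
    calc Δ * Q * V = Δ * (L * (U * V)) := by rw [hQLU]; simp only [Matrix.mul_assoc]
      _ = Δ * (L * ((Δ' * Δ) * (U * V))) := by rw [hΔ'Δ, Matrix.one_mul]
      _ = (Δ * L * Δ') * (Δ * U * V) := by simp only [Matrix.mul_assoc]
  have hsym : (Qᵀ * Df * Q)ᵀ = Qᵀ * Df * Q := by
    rw [hDfdef]
    simp only [Matrix.transpose_mul, Matrix.transpose_transpose,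
      Matrix.diagonal_transpose, Matrix.mul_assoc]
  have e1 : (Qᵀ * Df * Q) * (Qᵀ * Df * Q) = Qᵀ * (Df * Df) * Q := by
    calc (Qᵀ * Df * Q) * (Qᵀ * Df * Q)
        = Qᵀ * (Df * ((Q * Qᵀ) * (Df * Q))) := by simp only [Matrix.mul_assoc]
      _ = Qᵀ * (Df * (Df * Q)) := by rw [hQ.mul_transpose, Matrix.one_mul]
      _ = Qᵀ * (Df * Df) * Q := by simp only [Matrix.mul_assoc]
  have key : Qᵀ * (Df * Df) * Q = Rfᵀ * Rf := by
    rw [← e1]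
    nth_rewrite 1 [← hsym]
    rw [hfac]
    calc (Qf * Rf)ᵀ * (Qf * Rf) = Rfᵀ * ((Qfᵀ * Qf) * Rf) := by
          simp only [Matrix.transpose_mul, Matrix.mul_assoc]
      _ = Rfᵀ * Rf := by rw [hQf, Matrix.one_mul]
  have hΔΔ : Δ * Δ = Df * Df := by
    rw [hΔdef, hDfdef, Matrix.diagonal_mul_diagonal, Matrix.diagonal_mul_diagonal]
    exact congrArg _ (funext fun i => abs_mul_abs_self _)
  have horth : IsOrth (Δ * Q * V) := by
    show (Δ * Q * V)ᵀ * (Δ * Q * V) = 1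
    have step : (Δ * Q * V)ᵀ * (Δ * Q * V) = Vᵀ * ((Qᵀ * (Δ * Δ) * Q) * V) := by
      simp only [Matrix.transpose_mul, hΔt, Matrix.mul_assoc]
    rw [step, hΔΔ, key]
    calc Vᵀ * ((Rfᵀ * Rf) * V) = (Rf * V)ᵀ * (Rf * V) := by
          simp only [Matrix.transpose_mul, Matrix.mul_assoc]
      _ = 1 := by rw [hRfV, Matrix.transpose_one, Matrix.one_mul]
  have hL' : IsUnipLower (Δ * L * Δ') := by
    constructor
    · intro i j hij
      rw [hent, hL.1 i j hij, mul_zero, zero_mul]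
    · intro i
      rw [hent, hL.2 i, mul_one]
      exact mul_inv_cancel₀ (hδ i).ne'
  have hU' : IsUpperTriPos (Δ * U * V) := by
    constructor
    · intro i j hij
      exact upper_mul_upper (fun a b h => upper_mul_upper hΔup hU.1 a b h) hV.1 i j hij
    · intro i
      rw [diag_mul_upper (fun a b h => upper_mul_upper hΔup hU.1 a b h) hV.1,
        diag_mul_upper hΔup hU.1, hΔdiag]
      exact mul_pos (mul_pos (hδ i) (hU.2 i)) (hV.2 i)
  have h5 : Qf = Qᵀ * Df * Q * V := by
    calc Qf = Qf * (Rf * V) := by rw [hRfV, Matrix.mul_one]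
      _ = (Qf * Rf) * V := (Matrix.mul_assoc _ _ _).symm
      _ = (Qᵀ * Df * Q) * V := by rw [hfac]
  have hQQf : Q * Qf = Df * (Q * V) := by
    rw [h5]
    calc Q * (Qᵀ * Df * Q * V) = (Q * Qᵀ) * (Df * (Q * V)) := by
          simp only [Matrix.mul_assoc]
      _ = Df * (Q * V) := by rw [hQ.mul_transpose, Matrix.one_mul]
  have hT' : Qfᵀ * T * Qf = (Δ * Q * V)ᵀ * Λ * (Δ * Q * V) := by
    have hdd : Dfᵀ * Λ * Df = Δᵀ * Λ * Δ := by
      rw [hDfdef, hΔdef, hΛdef]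
      simp only [Matrix.diagonal_transpose]
      rw [Matrix.diagonal_mul_diagonal, Matrix.diagonal_mul_diagonal,
        Matrix.diagonal_mul_diagonal, Matrix.diagonal_mul_diagonal]
      refine congrArg _ (funext fun i => ?_)
      show fπ i * lamπ i * fπ i = |fπ i| * lamπ i * |fπ i|
      rw [show fπ i * lamπ i * fπ i = lamπ i * (fπ i * fπ i) from by ring,
        show |fπ i| * lamπ i * |fπ i| = lamπ i * (|fπ i| * |fπ i|) from by ring,
        abs_mul_abs_self]
    calc Qfᵀ * T * Qf = Qfᵀ * (Qᵀ * Λ * Q) * Qf := by rw [hT]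
      _ = (Q * Qf)ᵀ * Λ * (Q * Qf) := (conjMul Λ Q Qf).symm
      _ = (Df * (Q * V))ᵀ * Λ * (Df * (Q * V)) := by rw [hQQf]
      _ = (Q * V)ᵀ * (Dfᵀ * Λ * Df) * (Q * V) := conjMul Λ Df (Q * V)
      _ = (Q * V)ᵀ * (Δᵀ * Λ * Δ) * (Q * V) := by rw [hdd]
      _ = (Δ * (Q * V))ᵀ * Λ * (Δ * (Q * V)) := (conjMul Λ Δ (Q * V)).symm
      _ = (Δ * Q * V)ᵀ * Λ * (Δ * Q * V) := by rw [← Matrix.mul_assoc Δ Q V]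
  have hΛΔ : Δ * Λ = Λ * Δ := by
    rw [hΔdef, hΛdef, Matrix.diagonal_mul_diagonal, Matrix.diagonal_mul_diagonal]
    exact congrArg _ (funext fun i => mul_comm _ _)
  have hLB' : (Δ * L * Δ') * (Δ * B * Δ') = Λ * (Δ * L * Δ') := by
    calc (Δ * L * Δ') * (Δ * B * Δ')
        = Δ * (L * ((Δ' * Δ) * (B * Δ'))) := by simp only [Matrix.mul_assoc]
      _ = Δ * (L * (B * Δ')) := by rw [hΔ'Δ, Matrix.one_mul]
      _ = (Δ * (L * B)) * Δ' := by simp only [Matrix.mul_assoc]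
      _ = (Δ * (Λ * L)) * Δ' := by rw [hLB]
      _ = ((Δ * Λ) * L) * Δ' := by simp only [Matrix.mul_assoc]
      _ = ((Λ * Δ) * L) * Δ' := by rw [hΛΔ]
      _ = Λ * (Δ * L * Δ') := by simp only [Matrix.mul_assoc]
  refine ⟨Δ * Q * V, Δ * L * Δ', Δ * U * V, Δ * B * Δ',
    ⟨horth, ?_, hT', hQ'LU, hL', hU', hLB', ?_⟩, ?_⟩
  · rw [hQ'LU]
    exact luPositive_mul hL' hU'
  · intro i j h1 h2
    rw [hent, hBz i j h1 h2, mul_zero, zero_mul]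
  · intro i j
    exact hent B i j

variable {n : ℕ}

lemma part2Main (lamπ fπ : Fin n → ℝ)
    (hdist : ∀ i j : Fin n, lamπ i = lamπ j → i = j)
    (hfnz : ∀ i, fπ i ≠ 0)
    (hdec : ∀ i j : Fin n, i < j → |fπ j| < |fπ i|)
    (T : ℕ → Matrix (Fin n) (Fin n) ℝ)
    (h0 : ∃ Q L U B, ChartData lamπ (T 0) Q L U B)
    (hstep : ∀ k : ℕ, ∃ S Qf Rf : Matrix (Fin n) (Fin n) ℝ,
      IsOrth S ∧ T k = Sᵀ * Matrix.diagonal lamπ * S ∧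
      IsOrth Qf ∧ IsUpperTriPos Rf ∧
      Sᵀ * Matrix.diagonal fπ * S = Qf * Rf ∧
      T (k + 1) = Qfᵀ * T k * Qf) :
    Tendsto T atTop (𝓝 (Matrix.diagonal lamπ)) := by
  classical
  obtain ⟨Q0, L, U, B, hQ0, hQ0pos, hT0, hQ0LU, hL, hU, -, -⟩ := h0
  choose S Qf Rf hS hTS hQfo hRfpos hfac hTsucc using hstep
  set Λ : Matrix (Fin n) (Fin n) ℝ := Matrix.diagonal lamπ with hΛdef
  set Df : Matrix (Fin n) (Fin n) ℝ := Matrix.diagonal fπ with hDfdef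
  set δ : Fin n → ℝ := fun i => |fπ i| with hδdef
  have hδpos : ∀ i, 0 < δ i := fun i => abs_pos.2 (hfnz i)
  set ε : Fin n → ℝ := fun i => fπ i / δ i with hεdef
  have hε2 : ∀ i, ε i * ε i = 1 := by
    intro i
    rw [hεdef]
    show fπ i / δ i * (fπ i / δ i) = 1
    rw [div_mul_div_comm, hδdef]
    show fπ i * fπ i / (|fπ i| * |fπ i|) = 1
    rw [abs_mul_abs_self]
    exact div_self (mul_ne_zero (hfnz i) (hfnz i))
  have hεδ : ∀ i, ε i * δ i = fπ i := fun i => div_mul_cancel₀ _ (hδpos i).ne'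
  -- sequences
  set P : ℕ → Matrix (Fin n) (Fin n) ℝ := fun k => ((List.range k).map Qf).prod with hPdef
  set Uk : ℕ → Matrix (Fin n) (Fin n) ℝ :=
    fun k => (((List.range k).map Rf).reverse).prod with hUkdef
  have hP0 : P 0 = 1 := by simp [hPdef]
  have hPsucc : ∀ k, P (k + 1) = P k * Qf k := by
    intro k
    simp [hPdef, List.range_succ]
  have hU0 : Uk 0 = 1 := by simp [hUkdef]
  have hUsucc : ∀ k, Uk (k + 1) = Rf k * Uk k := by
    intro k
    simp [hUkdef, List.range_succ]
  have hPorth : ∀ k, IsOrth (P k) := by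
    intro k
    induction k with
    | zero => rw [hP0]; show (1:Matrix (Fin n) (Fin n) ℝ)ᵀ * 1 = 1; simp
    | succ k ih => rw [hPsucc]; exact ih.mul (hQfo k)
  have hone : IsUpperTriPos (1 : Matrix (Fin n) (Fin n) ℝ) := by
    constructor
    · intro i j hij; exact Matrix.one_apply_ne (ne_of_gt hij)
    · intro i; rw [Matrix.one_apply_eq]; norm_num
  have hUkpos : ∀ k, IsUpperTriPos (Uk k) := by
    intro k
    induction k with
    | zero => rw [hU0]; exact hone
    | succ k ih => rw [hUsucc]; exact (hRfpos k).mul ih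
  have hTP : ∀ k, T k = (P k)ᵀ * T 0 * P k := by
    intro k
    induction k with
    | zero => rw [hP0]; simp
    | succ k ih =>
      rw [hTsucc k, ih, hPsucc, conjMul]
  have hQ0Pk : ∀ k, IsOrth (Q0 * P k) := fun k => hQ0.mul (hPorth k)
  have hTQP : ∀ k, T k = (Q0 * P k)ᵀ * Λ * (Q0 * P k) := by
    intro k
    rw [conjMul, ← hT0, ← hTP]
  -- the fundamental power identity
  have hPU : ∀ k, P k * Uk k = Q0ᵀ * Matrix.diagonal (fun i => fπ i ^ k) * Q0 := by
    intro k
    induction k with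
    | zero =>
      rw [hP0, hU0]
      have : (Matrix.diagonal (fun i => fπ i ^ 0) : Matrix (Fin n) (Fin n) ℝ) = 1 := by
        rw [← Matrix.diagonal_one]
        exact congrArg _ (funext fun i => pow_zero _)
      rw [this]
      simp only [Matrix.mul_one, Matrix.one_mul]
      exact hQ0.symm
    | succ k ih =>
      have huniq : (S k)ᵀ * Df * S k = (Q0 * P k)ᵀ * Df * (Q0 * P k) := by
        rw [hDfdef]
        refine conj_diag_unique hdist (hS k) (hQ0Pk k) ?_
        rw [← hΛdef, ← hTS k, hTQP k]
      have hQfRf : Qf k * Rf k = (P k)ᵀ * (Q0ᵀ * Df * Q0) * P k := by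
        rw [← hfac k, huniq, conjMul]
      calc P (k+1) * Uk (k+1) = (P k * Qf k) * (Rf k * Uk k) := by
            rw [hPsucc, hUsucc]
        _ = P k * (Qf k * Rf k) * Uk k := by simp only [Matrix.mul_assoc]
        _ = P k * ((P k)ᵀ * (Q0ᵀ * Df * Q0) * P k) * Uk k := by rw [hQfRf]
        _ = (P k * (P k)ᵀ) * ((Q0ᵀ * Df * Q0) * (P k * Uk k)) := by
            simp only [Matrix.mul_assoc]
        _ = (Q0ᵀ * Df * Q0) * (P k * Uk k) := by
            rw [(hPorth k).mul_transpose, Matrix.one_mul]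
        _ = (Q0ᵀ * Df * Q0) * (Q0ᵀ * Matrix.diagonal (fun i => fπ i ^ k) * Q0) := by
            rw [ih]
        _ = Q0ᵀ * (Df * ((Q0 * Q0ᵀ) * (Matrix.diagonal (fun i => fπ i ^ k) * Q0))) := by
            simp only [Matrix.mul_assoc]
        _ = Q0ᵀ * (Df * (Matrix.diagonal (fun i => fπ i ^ k) * Q0)) := by
            rw [hQ0.mul_transpose, Matrix.one_mul]
        _ = Q0ᵀ * Matrix.diagonal (fun i => fπ i ^ (k+1)) * Q0 := by
            rw [hDfdef, ← Matrix.mul_assoc (Matrix.diagonal fπ), Matrix.diagonal_mul_diagonal]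
            simp only [Matrix.mul_assoc]
            exact congrArg (fun d => Q0ᵀ * (Matrix.diagonal d * Q0))
              (funext fun i => (pow_succ' (fπ i) k).symm)
  -- inverses
  obtain ⟨hN, hLN, hNL⟩ := hL.inv
  have hVk : ∀ k, IsUpperTriPos (Uk k)⁻¹ ∧ Uk k * (Uk k)⁻¹ = 1 ∧ (Uk k)⁻¹ * Uk k = 1 :=
    fun k => (hUkpos k).inv
  set Dk : ℕ → Matrix (Fin n) (Fin n) ℝ :=
    fun k => Matrix.diagonal (fun i => δ i ^ k) with hDkdef
  set Dk' : ℕ → Matrix (Fin n) (Fin n) ℝ :=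
    fun k => Matrix.diagonal (fun i => (δ i ^ k)⁻¹) with hDk'def
  set Ek : ℕ → Matrix (Fin n) (Fin n) ℝ :=
    fun k => Matrix.diagonal (fun i => ε i ^ k) with hEkdef
  have hδk0 : ∀ (k : ℕ) (i : Fin n), δ i ^ k ≠ 0 := fun k i => pow_ne_zero k (hδpos i).ne'
  have hDk'Dk : ∀ k, Dk' k * Dk k = 1 := by
    intro k
    simp only [hDkdef, hDk'def]
    rw [Matrix.diagonal_mul_diagonal, ← Matrix.diagonal_one]
    exact congrArg _ (funext fun i => inv_mul_cancel₀ (hδk0 k i))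
  have hEkEk : ∀ k, Ek k * Ek k = 1 := by
    intro k
    simp only [hEkdef]
    rw [Matrix.diagonal_mul_diagonal, ← Matrix.diagonal_one]
    refine congrArg _ (funext fun i => ?_)
    show ε i ^ k * ε i ^ k = 1
    rw [← mul_pow, hε2, one_pow]
  have hEkt : ∀ k, (Ek k)ᵀ = Ek k := by
    intro k
    simp only [hEkdef]
    exact Matrix.diagonal_transpose _
  have hEkΛ : ∀ k, Ek k * Λ * Ek k = Λ := by
    intro k
    simp only [hEkdef, hΛdef]
    rw [Matrix.diagonal_mul_diagonal, Matrix.diagonal_mul_diagonal]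
    refine congrArg _ (funext fun i => ?_)
    show ε i ^ k * lamπ i * ε i ^ k = lamπ i
    rw [show ε i ^ k * lamπ i * ε i ^ k = lamπ i * (ε i ^ k * ε i ^ k) from by ring,
      ← mul_pow, hε2, one_pow, mul_one]
  have hEkDk : ∀ k, Ek k * Dk k = Matrix.diagonal (fun i => fπ i ^ k) := by
    intro k
    simp only [hEkdef, hDkdef]
    rw [Matrix.diagonal_mul_diagonal]
    refine congrArg _ (funext fun i => ?_)
    show ε i ^ k * δ i ^ k = fπ i ^ k
    rw [← mul_pow, hεδ]
  set Ck : ℕ → Matrix (Fin n) (Fin n) ℝ :=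
    fun k => Dk k * (L * (U * (Uk k)⁻¹)) with hCkdef
  have hQ0P : ∀ k, Q0 * P k = Ek k * Ck k := by
    intro k
    calc Q0 * P k = Q0 * (P k * (Uk k * (Uk k)⁻¹)) := by rw [(hVk k).2.1, Matrix.mul_one]
      _ = (Q0 * (P k * Uk k)) * (Uk k)⁻¹ := by simp only [Matrix.mul_assoc]
      _ = (Q0 * (Q0ᵀ * Matrix.diagonal (fun i => fπ i ^ k) * Q0)) * (Uk k)⁻¹ := by
          rw [hPU k]
      _ = ((Q0 * Q0ᵀ) * (Matrix.diagonal (fun i => fπ i ^ k) * (Q0 * (Uk k)⁻¹))) := by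
          simp only [Matrix.mul_assoc]
      _ = Matrix.diagonal (fun i => fπ i ^ k) * (Q0 * (Uk k)⁻¹) := by
          rw [hQ0.mul_transpose, Matrix.one_mul]
      _ = (Ek k * Dk k) * ((L * U) * (Uk k)⁻¹) := by rw [hEkDk, ← hQ0LU]
      _ = Ek k * Ck k := by rw [hCkdef]; simp only [Matrix.mul_assoc]
  have hCkeq : ∀ k, Ck k = Ek k * (Q0 * P k) := by
    intro k
    rw [hQ0P k, ← Matrix.mul_assoc, hEkEk k, Matrix.one_mul]
  have hCkorth : ∀ k, IsOrth (Ck k) := by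
    intro k
    show (Ck k)ᵀ * Ck k = 1
    rw [hCkeq k]
    calc (Ek k * (Q0 * P k))ᵀ * (Ek k * (Q0 * P k))
        = (Q0 * P k)ᵀ * ((Ek k)ᵀ * (Ek k * (Q0 * P k))) := by
          simp only [Matrix.transpose_mul, Matrix.mul_assoc]
      _ = (Q0 * P k)ᵀ * (Q0 * P k) := by
          rw [hEkt, ← Matrix.mul_assoc (Ek k), hEkEk, Matrix.one_mul]
      _ = 1 := hQ0Pk k
  have hTC : ∀ k, T k = (Ck k)ᵀ * Λ * Ck k := by
    intro k
    rw [hTQP k, hQ0P k, conjMul, hEkt, hEkΛ]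
  set Nk : ℕ → Matrix (Fin n) (Fin n) ℝ :=
    fun k => Dk k * (L⁻¹ * Dk' k) with hNkdef
  have hNkCk : ∀ k, Nk k * Ck k = Dk k * (U * (Uk k)⁻¹) := by
    intro k
    calc Nk k * Ck k
        = Dk k * (L⁻¹ * ((Dk' k * Dk k) * (L * (U * (Uk k)⁻¹)))) := by
          simp only [hNkdef, hCkdef, Matrix.mul_assoc]
      _ = Dk k * (L⁻¹ * (L * (U * (Uk k)⁻¹))) := by rw [hDk'Dk, Matrix.one_mul]
      _ = Dk k * ((L⁻¹ * L) * (U * (Uk k)⁻¹)) := by simp only [Matrix.mul_assoc]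
      _ = Dk k * (U * (Uk k)⁻¹) := by rw [hNL, Matrix.one_mul]
  have hDkup : ∀ (k : ℕ) (i j : Fin n), j < i → Dk k i j = 0 := by
    intro k i j hij
    simp only [hDkdef]
    exact Matrix.diagonal_apply_ne _ (ne_of_gt hij)
  have hDkdiag : ∀ (k : ℕ) (i : Fin n), Dk k i i = δ i ^ k := by
    intro k i
    simp only [hDkdef]
    exact Matrix.diagonal_apply_eq _ i
  have hRkup : ∀ k, ∀ i j : Fin n, j < i → (Nk k * Ck k) i j = 0 := by
    intro k i j hij
    rw [hNkCk]
    exact upper_mul_upper (hDkup k)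
      (fun a b h => upper_mul_upper hU.1 (hVk k).1.1 a b h) i j hij
  have hRkpos : ∀ k, ∀ i : Fin n, 0 < (Nk k * Ck k) i i := by
    intro k i
    rw [hNkCk, diag_mul_upper (hDkup k)
      (fun a b h => upper_mul_upper hU.1 (hVk k).1.1 a b h),
      diag_mul_upper hU.1 (hVk k).1.1, hDkdiag]
    exact mul_pos (pow_pos (hδpos i) k) (mul_pos (hU.2 i) ((hVk k).1.2 i))
  have hNk1 : Tendsto Nk atTop (𝓝 1) := by
    apply matrix_tendsto_of_entries
    intro i j
    have hent : ∀ k, Nk k i j = δ i ^ k * (L⁻¹ i j * (δ j ^ k)⁻¹) := by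
      intro k
      simp only [hNkdef, hDkdef, hDk'def]
      rw [Matrix.diagonal_mul, Matrix.mul_diagonal]
    rcases lt_trichotomy i j with h | h | h
    · have hz : ∀ k, Nk k i j = 0 := by
        intro k
        rw [hent k, hN.1 i j h, zero_mul, mul_zero]
      rw [show ((1 : Matrix (Fin n) (Fin n) ℝ) i j) = 0 from
        Matrix.one_apply_ne (ne_of_lt h)]
      exact Tendsto.congr (fun k => (hz k).symm) tendsto_const_nhds
    · subst h
      have hz : ∀ k, Nk k i i = 1 := by
        intro k
        rw [hent k, hN.2 i, one_mul, mul_inv_cancel₀ (hδk0 k i)]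
      rw [show ((1 : Matrix (Fin n) (Fin n) ℝ) i i) = 1 from Matrix.one_apply_eq i]
      exact Tendsto.congr (fun k => (hz k).symm) tendsto_const_nhds
    · have hr0 : 0 ≤ δ i / δ j := le_of_lt (div_pos (hδpos i) (hδpos j))
      have hr1 : δ i / δ j < 1 := (div_lt_one (hδpos j)).2 (hdec j i h)
      have htend := (tendsto_pow_atTop_nhds_zero_of_lt_one hr0 hr1).const_mul (L⁻¹ i j)
      rw [mul_zero] at htend
      rw [show ((1 : Matrix (Fin n) (Fin n) ℝ) i j) = 0 from
        Matrix.one_apply_ne (ne_of_gt h)]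
      refine Tendsto.congr (fun k => ?_) htend
      rw [hent k, div_pow, div_eq_mul_inv]
      ring
  have hCk1 : Tendsto Ck atTop (𝓝 1) :=
    tendsto_one_of_orth_triangular Ck Nk hCkorth hRkup hRkpos hNk1
  have hcont : Continuous (fun M : Matrix (Fin n) (Fin n) ℝ => Mᵀ * Λ * M) :=
    (Continuous.matrix_mul (Continuous.matrix_mul
      (Continuous.matrix_transpose continuous_id) continuous_const) continuous_id)
  have h1 : Tendsto (fun k => (Ck k)ᵀ * Λ * Ck k) atTop
      (𝓝 ((1 : Matrix (Fin n) (Fin n) ℝ)ᵀ * Λ * 1)) := (hcont.tendsto 1).comp hCk1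
  have h2 : (1 : Matrix (Fin n) (Fin n) ℝ)ᵀ * Λ * 1 = Λ := by
    rw [Matrix.transpose_one, Matrix.one_mul, Matrix.mul_one]
  rw [h2] at h1
  exact Tendsto.congr (fun k => (hTC k).symm) h1


end QRhelpers

/-- The QR step induced by `f` acts on `π`-bidiagonal coordinates by
`βᵢ ↦ |f(λ_{π(i+1)})/f(λ_{π(i)})| βᵢ`; consequently, if
`|f(λ_{π(1)})| > … > |f(λ_{π(n)})|`, the QR iterates of any `T ∈ U_Λ^π` converge
to `Λ^π`.  (Here `f(T) = Qᵀ diag(f ∘ λ^π) Q` by functional calculus.) -/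
theorem stmt18 (n : ℕ) (lam : Fin n → ℝ) (hlam : StrictMono lam)
    (π : Equiv.Perm (Fin n)) (f : ℝ → ℝ) (hf : Continuous f)
    (hfnz : ∀ i, f (lam i) ≠ 0) :
    (∀ T Q L U B Qf Rf : Matrix (Fin n) (Fin n) ℝ,
      ChartData (fun i => lam (π i)) T Q L U B →
      IsOrth Qf → IsUpperTriPos Rf →
      Qᵀ * Matrix.diagonal (fun i => f (lam (π i))) * Q = Qf * Rf →
      ∃ Q' L' U' B' : Matrix (Fin n) (Fin n) ℝ,
        ChartData (fun i => lam (π i)) (Qfᵀ * T * Qf) Q' L' U' B' ∧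
        ∀ i j : Fin n, (i : ℕ) = (j : ℕ) + 1 →
          B' i j = |f (lam (π i)) / f (lam (π j))| * B i j) ∧
    ((∀ i j : Fin n, i < j → |f (lam (π j))| < |f (lam (π i))|) →
      ∀ T : ℕ → Matrix (Fin n) (Fin n) ℝ,
        (∃ Q L U B, ChartData (fun i => lam (π i)) (T 0) Q L U B) →
        (∀ k : ℕ, ∃ S Qf Rf : Matrix (Fin n) (Fin n) ℝ,
          IsOrth S ∧ T k = Sᵀ * Matrix.diagonal (fun i => lam (π i)) * S ∧
          IsOrth Qf ∧ IsUpperTriPos Rf ∧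
          Sᵀ * Matrix.diagonal (fun i => f (lam (π i))) * S = Qf * Rf ∧
          T (k + 1) = Qfᵀ * T k * Qf) →
        Filter.Tendsto T Filter.atTop
          (nhds (Matrix.diagonal (fun i => lam (π i))))) := by
  have hdist : ∀ i j : Fin n, lam (π i) = lam (π j) → i = j := by
    intro i j h
    exact π.injective (hlam.injective h)
  constructor
  · intro T Q L U B Qf Rf hCD hQf hRf hfac
    obtain ⟨Q', L', U', B', hCD', hscale⟩ :=
      part1Main (fun i => lam (π i)) (fun i => f (lam (π i)))
        (fun i => hfnz (π i)) T Q L U B Qf Rf hCD hQf hRf hfac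
    refine ⟨Q', L', U', B', hCD', ?_⟩
    intro i j _
    rw [hscale i j, abs_div, div_eq_mul_inv]
    ring
  · intro hdecr T h0 hstep
    exact part2Main (fun i => lam (π i)) (fun i => f (lam (π i))) hdist
      (fun i => hfnz (π i)) (fun i j hij => hdecr i j hij) T h0 hstep
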